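/- Correctness of the stable set decision diagram: let G be a simple graph on Fin n and x : Fin n → Bool. Define states s : ℕ → Finset (Fin n) by s 0 = Finset.univ and, for k < n, s (k+1) = s k \ N[k] if x k = true and s (k+1) = s k \ {k} if x k = false, where N[k] denotes the closed neighborhood of vertex k in G (vertex k together with all vertices adjacent to it). Then the set { k : x k = true } is a stable (independent) set of G if and only if for every k < n with x k = true one has k ∈ s k. -/

import Mathlib

open Finset

/-- Correctness of the stable set decision diagram: with states given by
the sets of still-available vertices (`s 0 = univ`; including vertex `k` removes its
closed neighborhood, excluding it removes only `k`), the selected vertices form a stable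
(independent) set of `G` iff every included vertex is still available at its step. -/
theorem stable_set_decision_diagram_correct (n : ℕ) (G : SimpleGraph (Fin n))
    [DecidableRel G.Adj] (x : Fin n → Bool)
    (s : ℕ → Finset (Fin n)) (h0 : s 0 = Finset.univ)
    (hs : ∀ k : Fin n, s ((k : ℕ) + 1) =
      if x k = true then s (k : ℕ) \ insert k (G.neighborFinset k)
      else s (k : ℕ) \ {k}) :
    (∀ j k : Fin n, x j = true → x k = true → ¬ G.Adj j k) ↔
      (∀ k : Fin n, x k = true → k ∈ s (k : ℕ)) := by
  have key : ∀ m, m ≤ n → ∀ v : Fin n, (v ∈ s m ↔ ∀ j : Fin n, (j : ℕ) < m →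
      ((x j = true → ¬(v = j ∨ G.Adj j v)) ∧ (x j = false → v ≠ j))) := by
    intro m
    induction m with
    | zero => simp [h0]
    | succ m ih =>
      intro hm v
      have hmn : m < n := hm
      have ihv := ih (le_of_lt hmn) v
      have hcast : ((⟨m, hmn⟩ : Fin n) : ℕ) = m := rfl
      have hstep := hs ⟨m, hmn⟩
      rw [hcast] at hstep
      have hsplit : ∀ j : Fin n, (j : ℕ) < m + 1 ↔ (j : ℕ) < m ∨ j = ⟨m, hmn⟩ := by
        intro j
        rw [Nat.lt_succ_iff_lt_or_eq, Fin.ext_iff]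
      constructor
      · intro hv j hj
        rw [hsplit] at hj
        rcases hj with hj | rfl
        · rw [hstep] at hv
          cases hxm : x (⟨m, hmn⟩ : Fin n) <;> simp [hxm] at hv <;>
            exact (ihv.mp hv.1) j hj
        · rw [hstep] at hv
          cases hxm : x (⟨m, hmn⟩ : Fin n)
          · simp [hxm] at hv
            exact ⟨fun hx => absurd hx (by simp [hxm]), fun _ => hv.2⟩
          · simp [hxm] at hv
            refine ⟨fun _ h => ?_, fun hx => absurd hx (by simp [hxm])⟩
            rcases h with h | h
            · exact hv.2.1 h
            · exact hv.2.2 h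
      · intro hv
        rw [hstep]
        have hv1 : v ∈ s m := ihv.mpr (fun j hj => hv j ((hsplit j).mpr (Or.inl hj)))
        have hv2 := hv ⟨m, hmn⟩ ((hsplit _).mpr (Or.inr rfl))
        cases hxm : x (⟨m, hmn⟩ : Fin n) <;> simp [hxm]
        · exact ⟨hv1, hv2.2 hxm⟩
        · exact ⟨hv1, fun h => (hv2.1 hxm) (Or.inl h), fun h => (hv2.1 hxm) (Or.inr h)⟩
  constructor
  · intro hstab k hk
    rw [key k k.isLt.le]
    intro j hj
    refine ⟨fun hxj h => ?_, fun hxj => ?_⟩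
    · rcases h with h | h
      · exact absurd (Fin.ext_iff.mp h) (Nat.ne_of_gt hj)
      · exact hstab j k hxj hk h
    · intro h
      exact absurd (Fin.ext_iff.mp h) (Nat.ne_of_gt hj)
  · intro hmem j k hj hk hadj
    rcases lt_trichotomy (j : ℕ) (k : ℕ) with h | h | h
    · have := (key k k.isLt.le k).mp (hmem k hk) j h
      exact (this.1 hj) (Or.inr hadj)
    · exact G.loopless.irrefl k (by rwa [Fin.ext h] at hadj)
    · have := (key j j.isLt.le j).mp (hmem j hj) k h
      exact (this.1 hk) (Or.inr (G.adj_symm hadj))
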